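/- arXiv:2202.05979 — 3 statements merged into one kernel-verified Lean document; each statement's English description precedes it below -/
import Mathlib

section
/- Let δ > 0, 0 < R₁ < R₂, L > 0, γ̄ > 0. Let X be exponentially distributed with mean L, and let Y have density f_Y(y) = (2/δ) y^(2/δ−1)/(R₂²−R₁²) on [R₁^δ, R₂^δ], independent of X. Then the random variable Γ = γ̄ X / Y has density f_Γ(γ) = (2/(δ L γ̄ (R₂²−R₁²))) · (L γ̄/γ)^(1+2/δ) · [ γinc(1+2/δ, R₂^δ γ/(L γ̄)) − γinc(1+2/δ, R₁^δ γ/(L γ̄)) ] for γ > 0, where γinc(a,x) = ∫₀ˣ t^(a−1) e^(−t) dt is the lower incomplete gamma function. -/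
open MeasureTheory ProbabilityTheory Real Set Filter

/-- Exponential distribution with mean `m` (density `m⁻¹ e^{-x/m}` on `x ≥ 0`). -/
noncomputable def expMean (m : ℝ) : Measure ℝ :=
  volume.withDensity fun x => ENNReal.ofReal (if 0 ≤ x then m⁻¹ * Real.exp (-x / m) else 0)

/-- Path-loss distribution: density `(2/δ) y^{2/δ-1}/(R₂²-R₁²)` on `[R₁^δ, R₂^δ]`. -/
noncomputable def pathLossMeasure (δ R₁ R₂ : ℝ) : Measure ℝ :=
  volume.withDensity fun y => ENNReal.ofReal
    (if y ∈ Set.Icc (R₁ ^ δ) (R₂ ^ δ) then 2 / δ * y ^ (2 / δ - 1) / (R₂ ^ 2 - R₁ ^ 2) else 0)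

/-- Lower incomplete gamma function `γinc(a,x) = ∫₀ˣ t^{a-1} e^{-t} dt`. -/
noncomputable def lowerGamma (a x : ℝ) : ℝ := ∫ t in (0:ℝ)..x, t ^ (a - 1) * Real.exp (-t)

section AuxLemmas
open intervalIntegral
open scoped ENNReal

-- generic FTC: ∫ u..v, k * exp (-(k*x)) = exp(-(k*u)) - exp(-(k*v))
lemma exp_ftc (k : ℝ) (u v : ℝ) :
    ∫ x in u..v, k * Real.exp (-(k * x)) = Real.exp (-(k*u)) - Real.exp (-(k*v)) := by
  have hderiv : ∀ x ∈ uIcc u v, HasDerivAt (fun x => -Real.exp (-(k * x)))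
      (k * Real.exp (-(k * x))) x := by
    intro x _
    have h1 : HasDerivAt (fun x : ℝ => -(k * x)) (-k) x := by
      have h0 := ((hasDerivAt_id x).const_mul k).neg
      simp only [mul_one] at h0
      exact h0
    have := (h1.exp).neg
    rw [show k * Real.exp (-(k * x)) = -(Real.exp (-(k * x)) * -k) by ring]
    exact this
  have hint : IntervalIntegrable (fun x => k * Real.exp (-(k * x))) volume u v := by
    apply Continuous.intervalIntegrable
    continuity
  have := intervalIntegral.integral_eq_sub_of_hasDerivAt hderiv hint
  rw [intervalIntegral.integral_const_mul]
  simp at this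
  linarith [this]

lemma cont_rpow_exp {p : ℝ} (hp : 0 ≤ p) : Continuous (fun t : ℝ => t ^ p * Real.exp (-t)) :=
  (Real.continuous_rpow_const hp).mul (Real.continuous_exp.comp continuous_neg)

lemma lowerGamma_sub {p : ℝ} (hp : 0 ≤ p) (x₁ x₂ : ℝ) :
    lowerGamma (1 + p) x₂ - lowerGamma (1 + p) x₁ =
      ∫ t in x₁..x₂, t ^ p * Real.exp (-t) := by
  have h : ∀ x : ℝ, lowerGamma (1 + p) x = ∫ t in (0:ℝ)..x, t ^ p * Real.exp (-t) := by
    intro x; simp [lowerGamma]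
  rw [h, h]
  exact intervalIntegral.integral_interval_sub_left
    ((cont_rpow_exp hp).intervalIntegrable _ _) ((cont_rpow_exp hp).intervalIntegrable _ _)

-- substitution
lemma subst_lemma {p c γ : ℝ} (hp : 0 < p) (hc : 0 < c) (hγ : 0 < γ) {A B : ℝ} (hA : 0 < A) (hAB : A ≤ B) :
    (c / γ) ^ (1 + p) * ∫ t in (A * γ / c)..(B * γ / c), t ^ p * Real.exp (-t)
      = ∫ y in A..B, y ^ p * Real.exp (-(γ / c * y)) := by
  set k := γ / c with hk
  have hk0 : 0 < k := div_pos hγ hc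
  have h1 : A * γ / c = k * A := by rw [hk]; ring
  have h2 : B * γ / c = k * B := by rw [hk]; ring
  rw [h1, h2]
  have hcomp := intervalIntegral.integral_comp_mul_left (fun t => t ^ p * Real.exp (-t)) hk0.ne'
    (a := A) (b := B)
  have h3 : (∫ t in (k*A)..(k*B), t ^ p * Real.exp (-t))
      = k * ∫ y in A..B, (k * y) ^ p * Real.exp (-(k * y)) := by
    rw [hcomp, smul_eq_mul, ← mul_assoc, mul_inv_cancel₀ hk0.ne', one_mul]
  rw [h3]
  have hcg : c / γ = k⁻¹ := by rw [hk]; field_simp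
  rw [hcg, ← mul_assoc]
  have hpt : ∫ y in A..B, (k * y) ^ p * Real.exp (-(k * y))
      = k ^ p * ∫ y in A..B, y ^ p * Real.exp (-(k * y)) := by
    rw [← intervalIntegral.integral_const_mul]
    apply intervalIntegral.integral_congr
    intro y hy
    simp only []
    rw [Real.mul_rpow hk0.le]
    · ring
    · rw [Set.uIcc_of_le hAB] at hy; exact le_trans hA.le hy.1
  rw [hpt]
  have hone : k⁻¹ ^ (1 + p) * (k * k ^ p) = 1 := by
    rw [Real.inv_rpow hk0.le, ← Real.rpow_one_add' hk0.le (by positivity)]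
    exact inv_mul_cancel₀ (by positivity)
  calc k⁻¹ ^ (1 + p) * k * (k ^ p * ∫ y in A..B, y ^ p * Real.exp (-(k * y)))
      = (k⁻¹ ^ (1 + p) * (k * k ^ p)) * ∫ y in A..B, y ^ p * Real.exp (-(k * y)) := by ring
    _ = _ := by rw [hone, one_mul]

lemma exp_int {k : ℝ} (hk : 0 < k) (a b : ℝ) :
    ∫ γ in a..b, Real.exp (-(k * γ)) = k⁻¹ * (Real.exp (-(k*a)) - Real.exp (-(k*b))) := by
  have := exp_ftc k a b
  rw [intervalIntegral.integral_const_mul] at this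
  field_simp at this ⊢
  linarith

lemma swap_lemma {p c : ℝ} (hp : 0 < p) (hc : 0 < c) {a b A B : ℝ} (hA : 0 < A)
    (hab : a ≤ b) (hAB : A ≤ B) :
    (∫ γ in a..b, ∫ y in A..B, y ^ p * Real.exp (-(γ / c * y)))
      = ∫ y in A..B, y ^ p * ((y/c)⁻¹ * (Real.exp (-(y/c*a)) - Real.exp (-(y/c*b)))) := by
  have hcont : Continuous (fun z : ℝ × ℝ => z.2 ^ p * Real.exp (-(z.1 / c * z.2))) := by
    apply Continuous.mul
    · exact (Real.continuous_rpow_const hp.le).comp continuous_snd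
    · exact Real.continuous_exp.comp (by continuity)
  simp only [intervalIntegral.integral_of_le hab, intervalIntegral.integral_of_le hAB,
    ← MeasureTheory.integral_Icc_eq_integral_Ioc]
  have hswap := MeasureTheory.integral_integral_swap
    (μ := volume.restrict (Icc a b)) (ν := volume.restrict (Icc A B))
    (f := fun γ y => y ^ p * Real.exp (-(γ / c * y))) ?_
  · rw [hswap]
    apply MeasureTheory.setIntegral_congr_fun measurableSet_Icc
    intro y hy
    have hy0 : 0 < y := lt_of_lt_of_le hA hy.1
    dsimp only
    rw [MeasureTheory.integral_Icc_eq_integral_Ioc, ← intervalIntegral.integral_of_le hab]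
    have h5 : (fun γ => y ^ p * Real.exp (-(γ / c * y))) = fun γ => y ^ p * Real.exp (-(y/c * γ)) := by
      funext γ; ring_nf
    rw [h5, intervalIntegral.integral_const_mul, exp_int (div_pos hy0 hc)]
  · rw [MeasureTheory.Measure.prod_restrict]
    have : IntegrableOn (fun z : ℝ × ℝ => z.2 ^ p * Real.exp (-(z.1 / c * z.2)))
        (Icc a b ×ˢ Icc A B) (volume.prod volume) := by
      rw [← MeasureTheory.Measure.volume_eq_prod ℝ ℝ]
      exact hcont.continuousOn.integrableOn_compact (isCompact_Icc.prod isCompact_Icc)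
    exact this

lemma expMean_Icc {L : ℝ} (hL : 0 < L) {u v : ℝ} (hu : 0 ≤ u) (huv : u ≤ v) :
    expMean L (Icc u v) = ENNReal.ofReal (Real.exp (-(L⁻¹ * u)) - Real.exp (-(L⁻¹ * v))) := by
  rw [expMean, withDensity_apply _ measurableSet_Icc]
  rw [MeasureTheory.setLIntegral_congr_fun_ae measurableSet_Icc
    (ae_of_all _ (fun x hx => by
      rw [if_pos (le_trans hu hx.1)]
      rw [show -x / L = -(L⁻¹ * x) by ring]))
    (g := fun x => ENNReal.ofReal (L⁻¹ * Real.exp (-(L⁻¹ * x))))]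
  rw [← MeasureTheory.ofReal_integral_eq_lintegral_ofReal]
  · rw [MeasureTheory.integral_Icc_eq_integral_Ioc, ← intervalIntegral.integral_of_le huv,
      exp_ftc]
  · apply Continuous.integrableOn_Icc
    continuity
  · exact ae_of_all _ (fun x => by positivity)

instance (m : ℝ) : SFinite (expMean m) := by unfold expMean; infer_instance
instance (δ R₁ R₂ : ℝ) : SFinite (pathLossMeasure δ R₁ R₂) := by
  unfold pathLossMeasure; infer_instance

lemma prob_side (δ R₁ R₂ L gbar : ℝ) (hδ : 0 < δ) (hR₁ : 0 < R₁) (hR : R₁ < R₂) (hL : 0 < L)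
    (hg : 0 < gbar) {a b : ℝ} (ha : 0 < a) (hab : a ≤ b) :
    ((expMean L).prod (pathLossMeasure δ R₁ R₂)) ((fun p : ℝ × ℝ => gbar * p.1 / p.2) ⁻¹' Icc a b)
      = ENNReal.ofReal (∫ y in (R₁ ^ δ)..(R₂ ^ δ),
          (2 / δ * y ^ (2 / δ - 1) / (R₂ ^ 2 - R₁ ^ 2)) *
            (Real.exp (-(y / (L * gbar) * a)) - Real.exp (-(y / (L * gbar) * b)))) := by
  set A := R₁ ^ δ with hAdef
  set B := R₂ ^ δ with hBdef
  have hA : 0 < A := Real.rpow_pos_of_pos hR₁ δ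
  have hAB : A ≤ B := Real.rpow_le_rpow hR₁.le hR.le hδ.le
  set c := L * gbar with hcdef
  have hc : 0 < c := mul_pos hL hg
  have hmeas : Measurable fun p : ℝ × ℝ => gbar * p.1 / p.2 :=
    (measurable_fst.const_mul gbar).div measurable_snd
  have hT : MeasurableSet ((fun p : ℝ × ℝ => gbar * p.1 / p.2) ⁻¹' Icc a b) :=
    hmeas measurableSet_Icc
  rw [MeasureTheory.Measure.prod_apply_symm hT]
  set F : ℝ → ℝ≥0∞ := fun y => expMean L ((fun x => (x, y)) ⁻¹' ((fun p : ℝ × ℝ => gbar * p.1 / p.2) ⁻¹' Icc a b)) with hF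
  have hFmeas : Measurable F := measurable_measure_prodMk_right hT
  have hfYmeas : Measurable (fun y => ENNReal.ofReal
      (if y ∈ Set.Icc A B then 2 / δ * y ^ (2 / δ - 1) / (R₂ ^ 2 - R₁ ^ 2) else 0)) := by
    apply Measurable.ennreal_ofReal
    exact Measurable.ite measurableSet_Icc (by fun_prop) measurable_const
  rw [pathLossMeasure, MeasureTheory.lintegral_withDensity_eq_lintegral_mul _ hfYmeas hFmeas]
  have hind : (fun y => ENNReal.ofReal
        (if y ∈ Set.Icc A B then 2 / δ * y ^ (2 / δ - 1) / (R₂ ^ 2 - R₁ ^ 2) else 0) * F y)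
      = (Icc A B).indicator
        (fun y => ENNReal.ofReal (2 / δ * y ^ (2 / δ - 1) / (R₂ ^ 2 - R₁ ^ 2)) * F y) := by
    funext y
    by_cases hy : y ∈ Icc A B
    · rw [if_pos hy, Set.indicator_of_mem hy]
    · rw [if_neg hy, Set.indicator_of_notMem hy]
      simp
  show (∫⁻ y, ENNReal.ofReal
        (if y ∈ Set.Icc A B then 2 / δ * y ^ (2 / δ - 1) / (R₂ ^ 2 - R₁ ^ 2) else 0) * F y) = _
  rw [hind]
  show (∫⁻ y, (Icc A B).indicator
        (fun y => ENNReal.ofReal (2 / δ * y ^ (2 / δ - 1) / (R₂ ^ 2 - R₁ ^ 2)) * F y) y) = _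
  rw [MeasureTheory.lintegral_indicator measurableSet_Icc]
  have hR2 : (0:ℝ) < R₂ ^ 2 - R₁ ^ 2 := by nlinarith
  have hEq : ∀ y ∈ Icc A B, ENNReal.ofReal (2/δ * y ^ (2/δ-1) / (R₂^2 - R₁^2)) * F y
      = ENNReal.ofReal ((2/δ * y ^ (2/δ-1) / (R₂^2 - R₁^2)) *
          (Real.exp (-(y/(L*gbar)*a)) - Real.exp (-(y/(L*gbar)*b)))) := by
    intro y hy
    have hy0 : 0 < y := lt_of_lt_of_le hA hy.1
    have hset : (fun x => (x, y)) ⁻¹' ((fun p : ℝ×ℝ => gbar * p.1 / p.2) ⁻¹' Icc a b)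
        = Icc (a*y/gbar) (b*y/gbar) := by
      ext x
      simp only [Set.mem_preimage, Set.mem_Icc]
      rw [le_div_iff₀ hy0, div_le_iff₀ hy0, div_le_iff₀ hg, le_div_iff₀ hg]
      constructor <;> rintro ⟨h1,h2⟩ <;> exact ⟨by nlinarith, by nlinarith⟩
    have hF' : F y = ENNReal.ofReal (Real.exp (-(y/(L*gbar)*a)) - Real.exp (-(y/(L*gbar)*b))) := by
      rw [hF]
      dsimp only
      rw [hset, expMean_Icc hL (by positivity)
        (by gcongr)]
      rw [show L⁻¹ * (a*y/gbar) = y/(L*gbar)*a by field_simp,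
        show L⁻¹ * (b*y/gbar) = y/(L*gbar)*b by field_simp]
    rw [hF', ← ENNReal.ofReal_mul (by positivity)]
  rw [MeasureTheory.setLIntegral_congr_fun_ae measurableSet_Icc (ae_of_all _ hEq)]
  rw [← MeasureTheory.ofReal_integral_eq_lintegral_ofReal ?_ ?_]
  · rw [MeasureTheory.integral_Icc_eq_integral_Ioc, ← intervalIntegral.integral_of_le hAB]
  · apply ContinuousOn.integrableOn_compact isCompact_Icc
    apply ContinuousOn.mul
    · apply ContinuousOn.div_const
      apply ContinuousOn.mul continuousOn_const
      intro y hy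
      exact (Real.continuousAt_rpow_const y _ (Or.inl (lt_of_lt_of_le hA hy.1).ne')).continuousWithinAt
    · exact (Continuous.sub (by fun_prop) (by fun_prop)).continuousOn
  · filter_upwards [MeasureTheory.ae_restrict_mem measurableSet_Icc] with y hy
    have hy0 : 0 < y := lt_of_lt_of_le hA hy.1
    have : Real.exp (-(y/(L*gbar)*b)) ≤ Real.exp (-(y/(L*gbar)*a)) := by
      apply Real.exp_le_exp.2
      have : y/(L*gbar)*a ≤ y/(L*gbar)*b :=
        mul_le_mul_of_nonneg_left hab (div_nonneg hy0.le hc.le)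
      linarith
    have h1 : 0 ≤ 2/δ * y ^ (2/δ-1) / (R₂^2 - R₁^2) := by positivity
    have h2 : 0 ≤ Real.exp (-(y/(L*gbar)*a)) - Real.exp (-(y/(L*gbar)*b)) := by linarith
    exact mul_nonneg h1 h2


end AuxLemmas

/-- density of Γ = γ̄X/Y in the random discrete phase shifting model. -/
theorem statement_1 {Ω : Type*} [MeasureSpace Ω] [IsProbabilityMeasure (ℙ : Measure Ω)]
    (δ R₁ R₂ L gbar : ℝ) (hδ : 0 < δ) (hR₁ : 0 < R₁) (hR : R₁ < R₂) (hL : 0 < L)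
    (hg : 0 < gbar) (X Y : Ω → ℝ) (hX : Measurable X) (hY : Measurable Y)
    (hind : IndepFun X Y ℙ)
    (hXlaw : Measure.map X ℙ = expMean L)
    (hYlaw : Measure.map Y ℙ = pathLossMeasure δ R₁ R₂) :
    ∀ a b : ℝ, 0 < a → a ≤ b →
      ℙ {ω | a ≤ gbar * X ω / Y ω ∧ gbar * X ω / Y ω ≤ b} =
        ENNReal.ofReal (∫ γ in a..b,
          2 / (δ * L * gbar * (R₂ ^ 2 - R₁ ^ 2)) * (L * gbar / γ) ^ (1 + 2 / δ) *
            (lowerGamma (1 + 2 / δ) (R₂ ^ δ * γ / (L * gbar)) -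
              lowerGamma (1 + 2 / δ) (R₁ ^ δ * γ / (L * gbar)))) := by
  intro a b ha hab
  have hc : (0:ℝ) < L * gbar := mul_pos hL hg
  have hA : (0:ℝ) < R₁ ^ δ := Real.rpow_pos_of_pos hR₁ δ
  have hAB : R₁ ^ δ ≤ R₂ ^ δ := Real.rpow_le_rpow hR₁.le hR.le hδ.le
  have hp : (0:ℝ) < 2 / δ := by positivity
  have hmeasT : Measurable fun p : ℝ × ℝ => gbar * p.1 / p.2 :=
    (measurable_fst.const_mul gbar).div measurable_snd
  have hT : MeasurableSet ((fun p : ℝ × ℝ => gbar * p.1 / p.2) ⁻¹' Icc a b) :=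
    hmeasT measurableSet_Icc
  have hpair : Measurable fun ω => (X ω, Y ω) := hX.prodMk hY
  have hmap : Measure.map (fun ω => (X ω, Y ω)) ℙ
      = (expMean L).prod (pathLossMeasure δ R₁ R₂) := by
    rw [← hXlaw, ← hYlaw]
    exact (ProbabilityTheory.indepFun_iff_map_prod_eq_prod_map_map
      hX.aemeasurable hY.aemeasurable).mp hind
  have hsetS : {ω | a ≤ gbar * X ω / Y ω ∧ gbar * X ω / Y ω ≤ b}
      = (fun ω => (X ω, Y ω)) ⁻¹' ((fun p : ℝ × ℝ => gbar * p.1 / p.2) ⁻¹' Icc a b) := rfl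
  rw [hsetS, ← Measure.map_apply hpair hT, hmap,
    prob_side δ R₁ R₂ L gbar hδ hR₁ hR hL hg ha hab]
  congr 1
  have h1 : ∀ γ ∈ uIcc a b,
      2 / (δ * L * gbar * (R₂ ^ 2 - R₁ ^ 2)) * (L * gbar / γ) ^ (1 + 2 / δ) *
        (lowerGamma (1 + 2 / δ) (R₂ ^ δ * γ / (L * gbar)) -
          lowerGamma (1 + 2 / δ) (R₁ ^ δ * γ / (L * gbar)))
      = 2 / (δ * L * gbar * (R₂ ^ 2 - R₁ ^ 2)) *
          ∫ y in (R₁ ^ δ)..(R₂ ^ δ), y ^ (2/δ) * Real.exp (-(γ / (L * gbar) * y)) := by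
    intro γ hγ
    have hγ0 : 0 < γ := lt_of_lt_of_le ha (by rw [uIcc_of_le hab] at hγ; exact hγ.1)
    rw [lowerGamma_sub hp.le, mul_assoc]
    congr 1
    exact subst_lemma hp hc hγ0 hA hAB
  rw [intervalIntegral.integral_congr h1, intervalIntegral.integral_const_mul,
    swap_lemma hp hc hA hab hAB, ← intervalIntegral.integral_const_mul]
  apply intervalIntegral.integral_congr
  intro y hy
  have hy0 : 0 < y := lt_of_lt_of_le hA (by rw [uIcc_of_le hAB] at hy; exact hy.1)
  have hR2 : (0:ℝ) < R₂ ^ 2 - R₁ ^ 2 := by nlinarith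
  dsimp only
  rw [show (2/δ : ℝ) = (2/δ - 1) + 1 by ring, Real.rpow_add_one hy0.ne']
  rw [show (2/δ - 1 + 1 : ℝ) = 2/δ by ring]
  field_simp
end

section
/- Under the same assumptions (X ~ Exp(mean L) independent of Y with density (2/δ) y^(2/δ−1)/(R₂²−R₁²) on [R₁^δ, R₂^δ], Γ = γ̄ X/Y), the cumulative distribution function of Γ is F_Γ(γ) = 1 − (2/(δ(R₂²−R₁²))) (Lγ̄/γ)^(2/δ) [ γinc(2/δ, R₂^δ γ/(Lγ̄)) − γinc(2/δ, R₁^δ γ/(Lγ̄)) ] for all γ > 0, where γinc is the lower incomplete gamma function. -/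
open MeasureTheory ProbabilityTheory Real Set Filter

lemma exp_int_s2 (L t : ℝ) (hL : 0 < L) :
    ∫ x in (0:ℝ)..t, L⁻¹ * Real.exp (-x / L) = 1 - Real.exp (-t / L) := by
  have hc : (-L⁻¹ : ℝ) ≠ 0 := by simp [hL.ne']
  have h1 : ∀ x : ℝ, -x / L = x * (-L⁻¹) := by intro x; field_simp
  rw [intervalIntegral.integral_const_mul]
  simp_rw [h1]
  rw [intervalIntegral.integral_comp_mul_right (fun x => Real.exp x) hc, integral_exp]
  field_simp
  rw [smul_eq_mul, zero_div, neg_zero, Real.exp_zero]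
  ring

lemma expMean_Iic (L t : ℝ) (hL : 0 < L) (ht : 0 ≤ t) :
    expMean L (Set.Iic t) = ENNReal.ofReal (1 - Real.exp (-t / L)) := by
  rw [expMean, withDensity_apply _ measurableSet_Iic]
  have h1 : (fun x : ℝ => ENNReal.ofReal (if 0 ≤ x then L⁻¹ * Real.exp (-x / L) else 0))
      = Set.indicator (Set.Ici 0) (fun x => ENNReal.ofReal (L⁻¹ * Real.exp (-x / L))) := by
    ext x
    by_cases h : (0:ℝ) ≤ x <;> simp [h, Set.indicator_of_mem, Set.indicator_of_notMem]
  rw [h1, lintegral_indicator measurableSet_Ici, Measure.restrict_restrict measurableSet_Ici,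
    Set.Ici_inter_Iic]
  rw [← ofReal_integral_eq_lintegral_ofReal]
  · rw [MeasureTheory.integral_Icc_eq_integral_Ioc, ← intervalIntegral.integral_of_le ht,
      exp_int_s2 L t hL]
  · exact (Continuous.integrableOn_Icc (by continuity))
  · filter_upwards with x
    positivity

lemma powInt (p a b : ℝ) (hp : 0 < p) (ha : 0 < a) (hab : a ≤ b) :
    ∫ y in a..b, p * y ^ (p - 1) = b ^ p - a ^ p := by
  rw [intervalIntegral.integral_const_mul,
    integral_rpow (Or.inr ⟨by intro h; apply hp.ne'; linarith,
      by rw [Set.uIcc_of_le hab]; intro h; exact absurd h.1 (by linarith)⟩)]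
  have h1 : p - 1 + 1 = p := by ring
  rw [h1]
  field_simp

lemma gammaInt (p a b c : ℝ) (hp : 0 < p) (ha : 0 < a) (hab : a ≤ b) (hc : 0 < c) :
    lowerGamma p (b * c) - lowerGamma p (a * c)
      = c ^ p * ∫ y in a..b, y ^ (p - 1) * Real.exp (-(c * y)) := by
  set f : ℝ → ℝ := fun t => t ^ (p - 1) * Real.exp (-t) with hf
  have hI : ∀ x : ℝ, IntervalIntegrable f volume 0 x := fun x =>
    (intervalIntegral.intervalIntegrable_rpow' (by linarith)).mul_continuousOn
      (Continuous.continuousOn (by continuity))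
  have h1 : lowerGamma p (b * c) - lowerGamma p (a * c) = ∫ t in a*c..b*c, f t := by
    rw [lowerGamma, lowerGamma]
    exact intervalIntegral.integral_interval_sub_left (hI _) (hI _)
  have h2 : ∫ y in a..b, f (y * c) = c⁻¹ * ∫ t in a*c..b*c, f t := by
    rw [intervalIntegral.integral_comp_mul_right f hc.ne', smul_eq_mul]
  have h3 : ∫ y in a..b, f (y * c)
      = c ^ (p - 1) * ∫ y in a..b, y ^ (p - 1) * Real.exp (-(c * y)) := by
    rw [← intervalIntegral.integral_const_mul]
    apply intervalIntegral.integral_congr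
    intro y hy
    have hy0 : 0 < y := lt_of_lt_of_le ha (by rw [Set.uIcc_of_le hab] at hy; exact hy.1)
    simp only [hf]
    rw [Real.mul_rpow hy0.le hc.le, mul_comm c y]
    ring
  have hcp : c * c ^ (p - 1) = c ^ p := by
    nth_rewrite 1 [← Real.rpow_one c]
    rw [← Real.rpow_add hc]
    ring_nf
  have h4 : ∫ t in a*c..b*c, f t = c * ∫ y in a..b, f (y * c) := by
    rw [h2, ← mul_assoc, mul_inv_cancel₀ hc.ne', one_mul]
  rw [h1, h4, h3, ← mul_assoc, hcp]

lemma meas_dens (δ R₁ R₂ : ℝ) : Measurable fun y : ℝ => ENNReal.ofReal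
    (if y ∈ Set.Icc (R₁ ^ δ) (R₂ ^ δ) then 2 / δ * y ^ (2 / δ - 1) / (R₂ ^ 2 - R₁ ^ 2) else 0) := by
  apply Measurable.ennreal_ofReal
  apply Measurable.ite measurableSet_Icc _ measurable_const
  apply Measurable.div_const
  apply Measurable.const_mul
  measurability


set_option maxHeartbeats 1000000 in
/-- CDF of Γ = γ̄X/Y in the random discrete phase shifting model. -/
theorem statement_2 {Ω : Type*} [MeasureSpace Ω] [IsProbabilityMeasure (ℙ : Measure Ω)]
    (δ R₁ R₂ L gbar : ℝ) (hδ : 0 < δ) (hR₁ : 0 < R₁) (hR : R₁ < R₂) (hL : 0 < L)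
    (hg : 0 < gbar) (X Y : Ω → ℝ) (hX : Measurable X) (hY : Measurable Y)
    (hind : IndepFun X Y ℙ)
    (hXlaw : Measure.map X ℙ = expMean L)
    (hYlaw : Measure.map Y ℙ = pathLossMeasure δ R₁ R₂) :
    ∀ γ : ℝ, 0 < γ →
      ℙ {ω | gbar * X ω / Y ω ≤ γ} =
        ENNReal.ofReal (1 - 2 / (δ * (R₂ ^ 2 - R₁ ^ 2)) * (L * gbar / γ) ^ (2 / δ) *
          (lowerGamma (2 / δ) (R₂ ^ δ * γ / (L * gbar)) -
            lowerGamma (2 / δ) (R₁ ^ δ * γ / (L * gbar)))) := by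
  intro γ hγ
  have hR₂ : 0 < R₂ := hR₁.trans hR
  set a : ℝ := R₁ ^ δ with ha_def
  set b : ℝ := R₂ ^ δ with hb_def
  set p : ℝ := 2 / δ with hp_def
  set D : ℝ := R₂ ^ 2 - R₁ ^ 2 with hD_def
  set c : ℝ := γ / (L * gbar) with hc_def
  have ha : 0 < a := Real.rpow_pos_of_pos hR₁ δ
  have hb : 0 < b := Real.rpow_pos_of_pos hR₂ δ
  have hab : a ≤ b := Real.rpow_le_rpow hR₁.le hR.le hδ.le
  have hD : 0 < D := by simp only [hD_def]; nlinarith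
  have hc : 0 < c := by positivity
  have hp : 0 < p := by positivity
  set S : Set (ℝ × ℝ) := {q : ℝ × ℝ | gbar * q.1 / q.2 ≤ γ} with hS_def
  have hS : MeasurableSet S :=
    measurableSet_le ((measurable_const.mul measurable_fst).div measurable_snd) measurable_const
  -- Step 1: express probability via product measure
  have step1 : ℙ {ω | gbar * X ω / Y ω ≤ γ} = ((expMean L).prod (pathLossMeasure δ R₁ R₂)) S := by
    have hpre : {ω | gbar * X ω / Y ω ≤ γ} = (fun ω => (X ω, Y ω)) ⁻¹' S := rfl
    rw [hpre, ← Measure.map_apply (hX.prodMk hY) hS,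
      (indepFun_iff_map_prod_eq_prod_map_map hX.aemeasurable hY.aemeasurable).mp hind,
      hXlaw, hYlaw]
  haveI : SFinite (expMean L) := by unfold expMean; infer_instance
  haveI : SFinite (pathLossMeasure δ R₁ R₂) := by unfold pathLossMeasure; infer_instance
  rw [step1, Measure.prod_apply_symm hS, pathLossMeasure,
    lintegral_withDensity_eq_lintegral_mul_non_measurable _
      (meas_dens δ R₁ R₂)
      (Filter.Eventually.of_forall fun y => ENNReal.ofReal_lt_top)]
  -- Step 2: rewrite integrand as an indicator
  have step2 : (fun y => (ENNReal.ofReal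
        (if y ∈ Set.Icc a b then 2 / δ * y ^ (p - 1) / D else 0)) *
        expMean L ((fun x => (x, y)) ⁻¹' S))
      = Set.indicator (Set.Icc a b)
          (fun y => ENNReal.ofReal (2 / δ * y ^ (p - 1) / D * (1 - Real.exp (-(c * y))))) := by
    ext y
    by_cases hy : y ∈ Set.Icc a b
    · have hy0 : 0 < y := lt_of_lt_of_le ha hy.1
      have hset : ((fun x => (x, y)) ⁻¹' S) = Set.Iic (γ * y / gbar) := by
        ext x
        simp only [Set.mem_preimage, hS_def, Set.mem_setOf_eq, Set.mem_Iic]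
        rw [div_le_iff₀ hy0, le_div_iff₀ hg]
        constructor <;> intro h <;> linarith
      rw [hset, expMean_Iic L _ hL (by positivity), Set.indicator_of_mem hy, if_pos hy]
      rw [← ENNReal.ofReal_mul (by
        have : (0:ℝ) ≤ y ^ (p - 1) := Real.rpow_nonneg hy0.le _
        positivity)]
      congr 2
      rw [hc_def]
      field_simp
    · simp [hy, Set.indicator_of_notMem hy]
  simp only [Pi.mul_apply]
  rw [show (fun y => (ENNReal.ofReal
        (if y ∈ Set.Icc a b then 2 / δ * y ^ (p - 1) / D else 0)) *
        expMean L ((fun x => (x, y)) ⁻¹' S)) = _ from step2,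
    lintegral_indicator measurableSet_Icc]
  -- Step 3: back to a real (Bochner) integral
  have hcontpow : ContinuousOn (fun y : ℝ => y ^ (p - 1)) (Set.Icc a b) := by
    apply ContinuousOn.rpow_const continuousOn_id
    intro y hy
    exact Or.inl (ne_of_gt (lt_of_lt_of_le ha hy.1))
  have hcont : ContinuousOn
      (fun y => 2 / δ * y ^ (p - 1) / D * (1 - Real.exp (-(c * y)))) (Set.Icc a b) := by
    apply ContinuousOn.mul
    · exact (continuousOn_const.mul hcontpow).div_const _
    · exact (continuousOn_const.sub (Continuous.continuousOn (by continuity)))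
  rw [← ofReal_integral_eq_lintegral_ofReal (hcont.integrableOn_Icc)
    ((ae_restrict_iff' measurableSet_Icc).2 (Filter.Eventually.of_forall fun y hy => by
      have hy0 : 0 < y := lt_of_lt_of_le ha hy.1
      have h1 : (0:ℝ) ≤ y ^ (p - 1) := Real.rpow_nonneg hy0.le _
      have h2 : Real.exp (-(c * y)) ≤ 1 := Real.exp_le_one_iff.mpr (by nlinarith)
      have h3 : (0:ℝ) ≤ 2 / δ * y ^ (p - 1) / D := by positivity
      show (0:ℝ) ≤ 2 / δ * y ^ (p - 1) / D * (1 - Real.exp (-(c * y)))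
      exact mul_nonneg h3 (by linarith)))]
  -- Step 4: real integral computation
  congr 1
  rw [MeasureTheory.integral_Icc_eq_integral_Ioc, ← intervalIntegral.integral_of_le hab]
  have hIpow : IntervalIntegrable (fun y : ℝ => y ^ (p - 1)) volume a b :=
    intervalIntegral.intervalIntegrable_rpow' (by linarith)
  have hIexp : IntervalIntegrable (fun y : ℝ => y ^ (p - 1) * Real.exp (-(c * y))) volume a b :=
    hIpow.mul_continuousOn (Continuous.continuousOn (by continuity))
  have hsplit : ∀ y ∈ Set.uIcc a b,
      2 / δ * y ^ (p - 1) / D * (1 - Real.exp (-(c * y)))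
        = 1 / D * (p * y ^ (p - 1)) - p / D * (y ^ (p - 1) * Real.exp (-(c * y))) := by
    intro y hy
    rw [hp_def]
    ring
  rw [intervalIntegral.integral_congr hsplit,
    intervalIntegral.integral_sub ((hIpow.const_mul p).const_mul (1 / D)) (hIexp.const_mul (p / D))]
  simp only [intervalIntegral.integral_const_mul]
  have hpow : ∫ y in a..b, (y:ℝ) ^ (p - 1) = (b ^ p - a ^ p) / p := by
    have h := powInt p a b hp ha hab
    rw [intervalIntegral.integral_const_mul] at h
    field_simp
    linarith
  have hexpval : ∫ y in a..b, y ^ (p - 1) * Real.exp (-(c * y))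
      = (c ^ p)⁻¹ * (lowerGamma p (b * c) - lowerGamma p (a * c)) := by
    rw [gammaInt p a b c hp ha hab hc, ← mul_assoc,
      inv_mul_cancel₀ (Real.rpow_pos_of_pos hc p).ne', one_mul]
  have harg_b : b * γ / (L * gbar) = b * c := by rw [hc_def]; ring
  have harg_a : a * γ / (L * gbar) = a * c := by rw [hc_def]; ring
  rw [hpow, hexpval, harg_b, harg_a]
  have hbp : b ^ p = R₂ ^ 2 := by
    rw [hb_def, hp_def, ← Real.rpow_natCast R₂ 2, ← Real.rpow_mul hR₂.le]
    congr 1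
    field_simp
    norm_num
  have hap : a ^ p = R₁ ^ 2 := by
    rw [ha_def, hp_def, ← Real.rpow_natCast R₁ 2, ← Real.rpow_mul hR₁.le]
    congr 1
    field_simp
    norm_num
  have hLg : (L * gbar / γ) ^ p = (c ^ p)⁻¹ := by
    rw [show L * gbar / γ = c⁻¹ by rw [hc_def, inv_div], Real.inv_rpow hc.le]
  rw [hbp, hap, hLg, ← hD_def]
  have hcpne : (c ^ p : ℝ) ≠ 0 := (Real.rpow_pos_of_pos hc p).ne'
  rw [hp_def]
  field_simp
end

section
/- Let f_E(γ) and F_B(γ) be as in the discrete model: F_B(γ) = 1 − e^{−γ/(Lγ̄_B)} and f_E the density of γ̄_E X/Y. Then the lower bound of SOP equals 1 − (2/(δ(R₂²−R₁²))) ∫_{R₁^δ}^{R₂^δ} y^{2/δ−1} · (γ̄_B y)/(γ̄_B y + R_s γ̄_E) dy, and this quantity is strictly increasing in R_s for R_s > 0 (strictly, since the integrand is strictly decreasing in R_s pointwise on a set of positive measure). -/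
open MeasureTheory ProbabilityTheory Real Set Filter

lemma expMean_eq_expMeasure (m : ℝ) : expMean m = ProbabilityTheory.expMeasure m⁻¹ := by
  unfold expMean ProbabilityTheory.expMeasure ProbabilityTheory.gammaMeasure
  congr 1
  funext x
  rw [show ProbabilityTheory.gammaPDF 1 m⁻¹ x = ProbabilityTheory.exponentialPDF m⁻¹ x from rfl,
    ProbabilityTheory.exponentialPDF_eq]
  congr 1
  split_ifs with h
  · rw [neg_div, div_eq_mul_inv, mul_comm x]
  · rfl

lemma expMean_Iic_s17 {m : ℝ} (hm : 0 < m) (t : ℝ) :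
    expMean m (Iic t) = ENNReal.ofReal (if 0 ≤ t then 1 - Real.exp (-(t/m)) else 0) := by
  rw [expMean_eq_expMeasure, ProbabilityTheory.expMeasure, ProbabilityTheory.gammaMeasure,
    withDensity_apply _ measurableSet_Iic,
    show ProbabilityTheory.gammaPDF 1 m⁻¹ = ProbabilityTheory.exponentialPDF m⁻¹ from rfl,
    ProbabilityTheory.lintegral_exponentialPDF_eq_antiDeriv (by positivity) t]
  congr 1
  split_ifs with h
  · rw [div_eq_mul_inv, mul_comm t]
  · rfl

lemma inner_integral {L gB gE Rs y : ℝ} (hL : 0 < L) (hgB : 0 < gB) (hgE : 0 < gE)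
    (hRs : 0 < Rs) (hy : 0 < y) :
    ∫⁻ x, expMean (L * gB) (Iic (Rs * (gE * x / y))) ∂(expMean L)
      = ENNReal.ofReal (Rs * gE / (gB * y + Rs * gE)) := by
  set k := Rs * gE / (y * (L * gB)) with hk_def
  have hk : 0 < k := by positivity
  have hr1 : (0:ℝ) < L⁻¹ := by positivity
  have hr2 : (0:ℝ) < L⁻¹ + k := by positivity
  set g : ℝ → ℝ := Set.indicator (Ici 0)
    (fun x => L⁻¹ * Real.exp (-(L⁻¹ * x)) - L⁻¹ * Real.exp (-((L⁻¹ + k) * x))) with hg_def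
  have hFmono : Monotone (fun t : ℝ => expMean (L * gB) (Iic t)) :=
    fun u v huv => measure_mono (Iic_subset_Iic.mpr huv)
  have hFmeas : Measurable (fun x : ℝ => expMean (L * gB) (Iic (Rs * (gE * x / y)))) := by
    exact hFmono.measurable.comp (by fun_prop)
  have hdens : Measurable (fun x : ℝ =>
      ENNReal.ofReal (if 0 ≤ x then L⁻¹ * Real.exp (-x / L) else 0)) := by
    apply ENNReal.measurable_ofReal.comp
    apply Measurable.ite measurableSet_Ici (by fun_prop) measurable_const
  rw [expMean, lintegral_withDensity_eq_lintegral_mul _ hdens hFmeas]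
  have hpt : ∀ x : ℝ, (ENNReal.ofReal (if 0 ≤ x then L⁻¹ * Real.exp (-x / L) else 0) *
      expMean (L * gB) (Iic (Rs * (gE * x / y)))) = ENNReal.ofReal (g x) := by
    intro x
    by_cases hx : 0 ≤ x
    · have hq : 0 ≤ Rs * (gE * x / y) := by positivity
      rw [if_pos hx, expMean_Iic_s17 (by positivity), if_pos hq,
        ← ENNReal.ofReal_mul (by positivity), hg_def,
        Set.indicator_of_mem (show x ∈ Ici (0:ℝ) from hx)]
      congr 1
      have e1 : -x / L = -(L⁻¹ * x) := by rw [neg_div, div_eq_mul_inv, mul_comm x]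
      have e2 : -(Rs * (gE * x / y) / (L * gB)) = -(k * x) := by
        rw [hk_def]; field_simp
      rw [e1, e2, mul_sub, mul_one, mul_assoc, ← Real.exp_add,
        show -(L⁻¹ * x) + -(k * x) = -((L⁻¹ + k) * x) by ring]
    · rw [if_neg hx, hg_def, Set.indicator_of_notMem (show x ∉ Ici (0:ℝ) from hx),
        ENNReal.ofReal_zero, zero_mul]
  simp only [Pi.mul_apply]
  simp_rw [hpt]
  have i1 : IntegrableOn (fun x => L⁻¹ * Real.exp (-(L⁻¹ * x))) (Ioi (0:ℝ)) := by
    have := (exp_neg_integrableOn_Ioi 0 hr1).const_mul L⁻¹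
    simpa only [neg_mul, IntegrableOn] using this
  have i2 : IntegrableOn (fun x => L⁻¹ * Real.exp (-((L⁻¹ + k) * x))) (Ioi (0:ℝ)) := by
    have := (exp_neg_integrableOn_Ioi 0 hr2).const_mul L⁻¹
    simpa only [neg_mul, IntegrableOn] using this
  have i1' : IntegrableOn (fun x => L⁻¹ * Real.exp (-(L⁻¹ * x))) (Ici (0:ℝ)) := by
    rwa [integrableOn_Ici_iff_integrableOn_Ioi]
  have i2' : IntegrableOn (fun x => L⁻¹ * Real.exp (-((L⁻¹ + k) * x))) (Ici (0:ℝ)) := by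
    rwa [integrableOn_Ici_iff_integrableOn_Ioi]
  have hsub : IntegrableOn (fun x => L⁻¹ * Real.exp (-(L⁻¹ * x)) -
      L⁻¹ * Real.exp (-((L⁻¹ + k) * x))) (Ici (0:ℝ)) := i1'.sub i2'
  have hgint : Integrable g := hsub.integrable_indicator measurableSet_Ici
  have hgnn : 0 ≤ᵐ[volume] g := by
    refine Filter.Eventually.of_forall ?_
    intro x
    apply Set.indicator_nonneg
    intro z hz
    have : -((L⁻¹ + k) * z) ≤ -(L⁻¹ * z) := by nlinarith [hz.out]
    have := Real.exp_le_exp.mpr this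
    nlinarith [this, hr1]
  rw [← MeasureTheory.ofReal_integral_eq_lintegral_ofReal hgint hgnn]
  congr 1
  rw [hg_def, integral_indicator measurableSet_Ici, integral_Ici_eq_integral_Ioi,
    integral_sub i1 i2]
  have key : ∀ r : ℝ, 0 < r → (∫ x in Ioi (0:ℝ), L⁻¹ * Real.exp (-(r * x))) = L⁻¹ * r⁻¹ := by
    intro r hr
    rw [MeasureTheory.integral_const_mul]
    have := integral_comp_mul_left_Ioi (fun u => Real.exp (-u)) 0 hr
    simp only [mul_zero, smul_eq_mul] at this
    rw [this, integral_exp_neg_Ioi_zero, mul_one]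
  rw [key _ hr1, key _ hr2]
  have hD : gB * y + Rs * gE ≠ 0 := by positivity
  rw [hk_def]
  field_simp
  ring

lemma mono_part {gB gE δ R₁ R₂ : ℝ} (hgB : 0 < gB) (hgE : 0 < gE) (hδ : 0 < δ)
    (hR₁ : 0 < R₁) (hR : R₁ < R₂) :
    StrictMonoOn (fun Rs => 1 - 2 / (δ * (R₂ ^ 2 - R₁ ^ 2)) *
      ∫ y in R₁ ^ δ..R₂ ^ δ, y ^ (2 / δ - 1) * (gB * y) / (gB * y + Rs * gE)) (Set.Ioi 0) := by
  set a := R₁ ^ δ with ha_def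
  set b := R₂ ^ δ with hb_def
  have ha : 0 < a := Real.rpow_pos_of_pos hR₁ δ
  have hab : a < b := Real.rpow_lt_rpow hR₁.le hR hδ
  have hsq : (0:ℝ) < R₂ ^ 2 - R₁ ^ 2 := by nlinarith
  have hc : 0 < 2 / (δ * (R₂ ^ 2 - R₁ ^ 2)) :=
    div_pos two_pos (mul_pos hδ hsq)
  intro s hs t ht hst
  simp only [Set.mem_Ioi] at hs ht
  have key : (∫ y in a..b, y ^ (2 / δ - 1) * (gB * y) / (gB * y + t * gE)) <
      ∫ y in a..b, y ^ (2 / δ - 1) * (gB * y) / (gB * y + s * gE) := by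
    have hcont : ∀ r : ℝ, 0 < r →
        ContinuousOn (fun y => y ^ (2 / δ - 1) * (gB * y) / (gB * y + r * gE)) (Icc a b) := by
      intro r hr y hy
      have hy0 : 0 < y := lt_of_lt_of_le ha hy.1
      have hden : gB * y + r * gE ≠ 0 := by positivity
      exact (((Real.continuousAt_rpow_const y _ (Or.inl hy0.ne')).mul
        (continuousAt_const.mul continuousAt_id)).div
        ((continuousAt_const.mul continuousAt_id).add continuousAt_const) hden).continuousWithinAt
    apply intervalIntegral.integral_lt_integral_of_continuousOn_of_le_of_exists_lt hab
      (hcont t ht) (hcont s hs)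
    · intro y hy
      have hy0 : 0 < y := lt_trans ha hy.1
      have h1 : (0:ℝ) < gB * y + s * gE := by positivity
      have h2 : (0:ℝ) < gB * y + t * gE := by positivity
      have hnum : (0:ℝ) < y ^ (2 / δ - 1) * (gB * y) := by positivity
      rw [div_le_div_iff₀ h2 h1]
      nlinarith [mul_pos hnum (mul_pos (sub_pos.mpr hst) hgE)]
    · refine ⟨a, ⟨le_refl a, hab.le⟩, ?_⟩
      have h1 : (0:ℝ) < gB * a + s * gE := by positivity
      have h2 : (0:ℝ) < gB * a + t * gE := by positivity
      have hnum : (0:ℝ) < a ^ (2 / δ - 1) * (gB * a) := by positivity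
      rw [div_lt_div_iff₀ h2 h1]
      nlinarith [mul_pos hnum (mul_pos (sub_pos.mpr hst) hgE)]
  simp only
  nlinarith [mul_lt_mul_of_pos_left key hc]

theorem statement_17 {Ω : Type*} [MeasureSpace Ω] [IsProbabilityMeasure (ℙ : Measure Ω)]
    (L gB gE δ R₁ R₂ : ℝ) (hL : 0 < L) (hgB : 0 < gB) (hgE : 0 < gE) (hδ : 0 < δ)
    (hR₁ : 0 < R₁) (hR : R₁ < R₂)
    (γB X Y : Ω → ℝ) (hmB : Measurable γB) (hmX : Measurable X) (hmY : Measurable Y)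
    (hBlaw : Measure.map γB ℙ = expMean (L * gB))
    (hXlaw : Measure.map X ℙ = expMean L)
    (hYlaw : Measure.map Y ℙ = pathLossMeasure δ R₁ R₂)
    (hXY : IndepFun X Y ℙ)
    (hBE : IndepFun γB (fun ω => (X ω, Y ω)) ℙ) :
    let Pl : ℝ → ℝ := fun Rs => 1 - 2 / (δ * (R₂ ^ 2 - R₁ ^ 2)) *
      ∫ y in R₁ ^ δ..R₂ ^ δ, y ^ (2 / δ - 1) * (gB * y) / (gB * y + Rs * gE)
    (∀ Rs : ℝ, 0 < Rs →
        ℙ {ω | γB ω ≤ Rs * (gE * X ω / Y ω)} = ENNReal.ofReal (Pl Rs)) ∧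
      StrictMonoOn Pl (Set.Ioi 0) := by
  intro Pl
  refine ⟨?_, mono_part hgB hgE hδ hR₁ hR⟩
  intro Rs hRs
  set a := R₁ ^ δ with ha_def
  set b := R₂ ^ δ with hb_def
  have ha : 0 < a := Real.rpow_pos_of_pos hR₁ δ
  have hab : a < b := Real.rpow_lt_rpow hR₁.le hR hδ
  have hsq : (0:ℝ) < R₂ ^ 2 - R₁ ^ 2 := by nlinarith
  set μX := expMean L with hμX
  set μY := pathLossMeasure δ R₁ R₂ with hμY
  set μB := expMean (L * gB) with hμB
  -- s-finiteness
  have sfX : SFinite μX := by rw [hμX, expMean]; infer_instance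
  have sfY : SFinite μY := by rw [hμY, pathLossMeasure]; infer_instance
  have sfB : SFinite μB := by rw [hμB, expMean]; infer_instance
  -- joint law
  have hmap2 : Measure.map (fun ω => (X ω, Y ω)) ℙ = μX.prod μY := by
    rw [(ProbabilityTheory.indepFun_iff_map_prod_eq_prod_map_map hmX.aemeasurable
      hmY.aemeasurable).mp hXY, hXlaw, hYlaw]
  have hmap3 : Measure.map (fun ω => ((X ω, Y ω), γB ω)) ℙ = (μX.prod μY).prod μB := by
    rw [(ProbabilityTheory.indepFun_iff_map_prod_eq_prod_map_map
      (hmX.prodMk hmY).aemeasurable hmB.aemeasurable).mp hBE.symm, hmap2, hBlaw]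
  have hT : Measurable (fun ω => ((X ω, Y ω), γB ω)) := (hmX.prodMk hmY).prodMk hmB
  have hgm : Measurable (fun p : ℝ × ℝ => Rs * (gE * p.1 / p.2)) := by fun_prop
  have hS : MeasurableSet {p : (ℝ × ℝ) × ℝ | p.2 ≤ Rs * (gE * p.1.1 / p.1.2)} :=
    measurableSet_le measurable_snd (hgm.comp measurable_fst)
  have hFmono : Monotone (fun t : ℝ => μB (Iic t)) :=
    fun u v huv => measure_mono (Iic_subset_Iic.mpr huv)
  have e0 : ℙ {ω | γB ω ≤ Rs * (gE * X ω / Y ω)}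
      = ((μX.prod μY).prod μB) {p : (ℝ × ℝ) × ℝ | p.2 ≤ Rs * (gE * p.1.1 / p.1.2)} := by
    rw [← hmap3, Measure.map_apply hT hS]
    rfl
  rw [e0, Measure.prod_apply hS]
  have e1 : (fun xy : ℝ × ℝ => μB (Prod.mk xy ⁻¹'
      {p : (ℝ × ℝ) × ℝ | p.2 ≤ Rs * (gE * p.1.1 / p.1.2)}))
      = fun xy : ℝ × ℝ => μB (Iic (Rs * (gE * xy.1 / xy.2))) := rfl
  rw [e1]
  have hf : Measurable (fun xy : ℝ × ℝ => μB (Iic (Rs * (gE * xy.1 / xy.2)))) :=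
    hFmono.measurable.comp hgm
  rw [MeasureTheory.lintegral_prod_symm' _ hf]
  -- now: ∫⁻ y, (∫⁻ x, μB (Iic (Rs * (gE * x / y))) ∂μX) ∂μY
  have hInnerMeas : Measurable (fun y : ℝ => ∫⁻ x, μB (Iic (Rs * (gE * x / y))) ∂μX) := by
    exact Measurable.lintegral_prod_left hf
  have hdY : Measurable (fun y : ℝ => ENNReal.ofReal
      (if y ∈ Set.Icc a b then 2 / δ * y ^ (2 / δ - 1) / (R₂ ^ 2 - R₁ ^ 2) else 0)) := by
    apply ENNReal.measurable_ofReal.comp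
    apply Measurable.ite measurableSet_Icc _ measurable_const
    fun_prop
  rw [hμY, pathLossMeasure, lintegral_withDensity_eq_lintegral_mul _ hdY hInnerMeas]
  set h2 : ℝ → ℝ := Set.indicator (Icc a b)
    (fun y => 2 / δ * y ^ (2 / δ - 1) / (R₂ ^ 2 - R₁ ^ 2) * (Rs * gE / (gB * y + Rs * gE)))
    with hh2_def
  have hpt : ∀ y : ℝ, (ENNReal.ofReal
      (if y ∈ Set.Icc a b then 2 / δ * y ^ (2 / δ - 1) / (R₂ ^ 2 - R₁ ^ 2) else 0) *
      ∫⁻ x, μB (Iic (Rs * (gE * x / y))) ∂μX) = ENNReal.ofReal (h2 y) := by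
    intro y
    by_cases hy : y ∈ Set.Icc a b
    · have hy0 : 0 < y := lt_of_lt_of_le ha hy.1
      rw [if_pos hy, hμB, hμX, inner_integral hL hgB hgE hRs hy0,
        ← ENNReal.ofReal_mul (by positivity), hh2_def, Set.indicator_of_mem hy]
    · rw [if_neg hy, hh2_def, Set.indicator_of_notMem hy, ENNReal.ofReal_zero, zero_mul]
  simp only [Pi.mul_apply]
  simp_rw [hpt]
  -- integrability of h2
  have hcont : ContinuousOn
      (fun y => 2 / δ * y ^ (2 / δ - 1) / (R₂ ^ 2 - R₁ ^ 2) * (Rs * gE / (gB * y + Rs * gE)))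
      (Icc a b) := by
    intro y hy
    have hy0 : 0 < y := lt_of_lt_of_le ha hy.1
    have hden : gB * y + Rs * gE ≠ 0 := by positivity
    exact ((((continuousAt_const.mul (Real.continuousAt_rpow_const y _ (Or.inl hy0.ne'))).div
      continuousAt_const (by positivity)).mul
      (continuousAt_const.div
        ((continuousAt_const.mul continuousAt_id).add continuousAt_const) hden)).continuousWithinAt)
  have hio : IntegrableOn
      (fun y => 2 / δ * y ^ (2 / δ - 1) / (R₂ ^ 2 - R₁ ^ 2) * (Rs * gE / (gB * y + Rs * gE)))
      (Icc a b) := hcont.integrableOn_compact isCompact_Icc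
  have h2int : Integrable h2 := hio.integrable_indicator measurableSet_Icc
  have h2nn : 0 ≤ᵐ[volume] h2 := by
    refine Filter.Eventually.of_forall ?_
    intro y
    apply Set.indicator_nonneg
    intro z hz
    have hz0 : 0 < z := lt_of_lt_of_le ha hz.1
    positivity
  rw [← MeasureTheory.ofReal_integral_eq_lintegral_ofReal h2int h2nn]
  congr 1
  -- now real computation
  rw [hh2_def, integral_indicator measurableSet_Icc, MeasureTheory.integral_Icc_eq_integral_Ioc,
    ← intervalIntegral.integral_of_le hab.le]
  have hδ' : δ ≠ 0 := hδ.ne'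
  have hcongr : Set.EqOn
      (fun y => 2 / δ * y ^ (2 / δ - 1) / (R₂ ^ 2 - R₁ ^ 2) * (Rs * gE / (gB * y + Rs * gE)))
      (fun y => 2 / (δ * (R₂ ^ 2 - R₁ ^ 2)) * y ^ (2 / δ - 1)
        - 2 / (δ * (R₂ ^ 2 - R₁ ^ 2)) * (y ^ (2 / δ - 1) * (gB * y) / (gB * y + Rs * gE)))
      (Set.uIcc a b) := by
    intro y hy
    rw [Set.uIcc_of_le hab.le] at hy
    have hy0 : 0 < y := lt_of_lt_of_le ha hy.1
    have hden : gB * y + Rs * gE ≠ 0 := by positivity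
    field_simp
    ring
  rw [intervalIntegral.integral_congr hcongr]
  have hi1 : IntervalIntegrable
      (fun y => 2 / (δ * (R₂ ^ 2 - R₁ ^ 2)) * y ^ (2 / δ - 1)) volume a b := by
    apply ContinuousOn.intervalIntegrable
    rw [Set.uIcc_of_le hab.le]
    intro y hy
    have hy0 : 0 < y := lt_of_lt_of_le ha hy.1
    exact (continuousAt_const.mul
      (Real.continuousAt_rpow_const y _ (Or.inl hy0.ne'))).continuousWithinAt
  have hi2 : IntervalIntegrable
      (fun y => 2 / (δ * (R₂ ^ 2 - R₁ ^ 2)) *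
        (y ^ (2 / δ - 1) * (gB * y) / (gB * y + Rs * gE))) volume a b := by
    apply ContinuousOn.intervalIntegrable
    rw [Set.uIcc_of_le hab.le]
    intro y hy
    have hy0 : 0 < y := lt_of_lt_of_le ha hy.1
    have hden : gB * y + Rs * gE ≠ 0 := by positivity
    exact (continuousAt_const.mul
      (((Real.continuousAt_rpow_const y _ (Or.inl hy0.ne')).mul
        (continuousAt_const.mul continuousAt_id)).div
        ((continuousAt_const.mul continuousAt_id).add continuousAt_const) hden)).continuousWithinAt
  rw [intervalIntegral.integral_sub hi1 hi2, intervalIntegral.integral_const_mul,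
    intervalIntegral.integral_const_mul]
  have hrpow : (∫ y in a..b, y ^ (2 / δ - 1)) = δ * (R₂ ^ 2 - R₁ ^ 2) / 2 := by
    rw [integral_rpow (Or.inl (by nlinarith [div_pos (show (0:ℝ) < 2 by norm_num) hδ]))]
    have e : (2:ℝ) / δ - 1 + 1 = 2 / δ := by ring
    rw [e]
    have eb : b ^ (2 / δ) = R₂ ^ 2 := by
      rw [hb_def, ← Real.rpow_natCast R₂ 2, ← Real.rpow_mul (le_of_lt (lt_trans hR₁ hR)),
        mul_div_cancel₀ _ hδ.ne']
      norm_num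
    have ea : a ^ (2 / δ) = R₁ ^ 2 := by
      rw [ha_def, ← Real.rpow_natCast R₁ 2, ← Real.rpow_mul hR₁.le,
        mul_div_cancel₀ _ hδ.ne']
      norm_num
    rw [eb, ea]
    field_simp
  rw [hrpow]
  have : 2 / (δ * (R₂ ^ 2 - R₁ ^ 2)) * (δ * (R₂ ^ 2 - R₁ ^ 2) / 2) = 1 := by
    field_simp
  rw [this]
end
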